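/- arXiv:1304.6721 — 3 statements merged into one kernel-verified Lean document; each statement's English description precedes it below -/
import Mathlib

section
/- Fix n ≥ 1. Let M ∈ SL(2,ℂ), let a ∈ ℂ² be a nonzero eigenvector with M a = λ a for some λ ∈ ℂ*, and let b₀, …, b_{n−1} be nonzero vectors in ℂ². Extend the sequence to all integer indices by b_{i+n} = M bᵢ. Assume ⟨a∧bᵢ⟩ ≠ 0 and ⟨bᵢ∧b_{i+1}⟩ ≠ 0 for all i, where ⟨x∧y⟩ = x₁y₂ − x₂y₁. Define xᵢ = ⟨a∧b_{i−1}⟩⟨b_{i+1}∧bᵢ⟩ / (⟨a∧b_{i+1}⟩⟨b_{i−1}∧bᵢ⟩). Then ∏_{i=0}^{n−1} (−xᵢ) = λ². -/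
/-- The standard area form ⟨x∧y⟩ = x₁y₂ − x₂y₁ on ℂ² = (Fin 2 → ℂ). -/
def wedge2 (x y : Fin 2 → ℂ) : ℂ := x 0 * y 1 - x 1 * y 0

lemma wedge2_mulVec (M : Matrix (Fin 2) (Fin 2) ℂ) (hM : M.det = 1) (u v : Fin 2 → ℂ) :
    wedge2 (M.mulVec u) (M.mulVec v) = wedge2 u v := by
  rw [Matrix.det_fin_two] at hM
  simp [wedge2, Matrix.mulVec, dotProduct, Fin.sum_univ_two]
  linear_combination (u 0 * v 1 - u 1 * v 0) * hM

lemma wedge2_smul (c : ℂ) (u v : Fin 2 → ℂ) :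
    wedge2 (c • u) v = c * wedge2 u v := by
  simp [wedge2]; ring

lemma wedge2_anti (u v : Fin 2 → ℂ) : wedge2 u v = -wedge2 v u := by
  simp [wedge2]; ring

theorem stmt_3 (n : ℕ) (hn : 1 ≤ n)
    (M : Matrix (Fin 2) (Fin 2) ℂ) (hM : M.det = 1)
    (a : Fin 2 → ℂ) (ha : a ≠ 0) (lam : ℂ) (hlam : lam ≠ 0)
    (heig : M.mulVec a = lam • a)
    (b : ℤ → (Fin 2 → ℂ)) (hb : ∀ i, b i ≠ 0)
    (hper : ∀ i : ℤ, b (i + n) = M.mulVec (b i))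
    (hab : ∀ i, wedge2 a (b i) ≠ 0) (hbb : ∀ i, wedge2 (b i) (b (i + 1)) ≠ 0)
    (x : ℤ → ℂ)
    (hx : ∀ i, x i = wedge2 a (b (i - 1)) * wedge2 (b (i + 1)) (b i) /
        (wedge2 a (b (i + 1)) * wedge2 (b (i - 1)) (b i))) :
    ∏ i ∈ Finset.range n, (-(x i)) = lam ^ 2 := by
  set A : ℤ → ℂ := fun i => wedge2 a (b i) with hA
  set B : ℤ → ℂ := fun i => wedge2 (b i) (b (i + 1)) with hB
  have hAne : ∀ i, A i ≠ 0 := hab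
  have hBne : ∀ i, B i ≠ 0 := hbb
  have hxneg : ∀ i : ℤ, -(x i) = A (i - 1) * B i / (A (i + 1) * B (i - 1)) := by
    intro i
    rw [hx i]
    have h1 : wedge2 (b (i + 1)) (b i) = -(B i) := by
      rw [wedge2_anti]
    have h2 : wedge2 (b (i - 1)) (b i) = B (i - 1) := by
      simp [hB]
    rw [h1, h2]
    field_simp
    simp only [hA]
    ring
  -- eigenvector relation
  have hlamA : ∀ v : Fin 2 → ℂ, lam * wedge2 a (M.mulVec v) = wedge2 a v := by
    intro v
    calc lam * wedge2 a (M.mulVec v) = wedge2 (lam • a) (M.mulVec v) := by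
          rw [wedge2_smul]
      _ = wedge2 (M.mulVec a) (M.mulVec v) := by rw [heig]
      _ = wedge2 a v := wedge2_mulVec M hM a v
  -- telescoping
  have key : ∀ m : ℕ, 1 ≤ m →
      ∏ i ∈ Finset.range m, (-(x i)) =
        A (-1) * A 0 * B ((m : ℤ) - 1) / (A ((m : ℤ) - 1) * A (m : ℤ) * B (-1)) := by
    intro m hm
    induction m, hm using Nat.le_induction with
    | base =>
        simp only [Finset.prod_range_one, Nat.cast_zero, Nat.cast_one]
        rw [hxneg 0]
        have h0 := hAne 0
        norm_num
        rw [show A (-1) * A 0 * B 0 = A 0 * (A (-1) * B 0) by ring,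
          show A 0 * A 1 * B (-1) = A 0 * (A 1 * B (-1)) by ring,
          mul_div_mul_left _ _ h0]
    | succ k hk ih =>
        rw [Finset.prod_range_succ, ih, hxneg k]
        have e1 : ((k : ℤ) + 1) - 1 = (k : ℤ) := by ring
        push_cast
        rw [e1]
        have h1 := hAne ((k:ℤ) - 1)
        have h2 := hAne (k:ℤ)
        have h3 := hAne ((k:ℤ) + 1)
        have h4 := hBne ((k:ℤ) - 1)
        have h5 := hBne (-1 : ℤ)
        have h6 := hAne (-1 : ℤ)
        have h7 := hAne 0
        have h8 := hBne (k:ℤ)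
        field_simp
  have hprod := key n hn
  -- periodicity consequences
  have hbn : b (n : ℤ) = M.mulVec (b 0) := by
    have := hper 0; simpa using this
  have hbn1 : b ((n : ℤ) - 1) = M.mulVec (b (-1)) := by
    have := hper (-1)
    have e : (-1 : ℤ) + n = (n : ℤ) - 1 := by ring
    rwa [e] at this
  have hAn : lam * A (n : ℤ) = A 0 := by
    simp only [hA]; rw [hbn]; exact hlamA (b 0)
  have hAn1 : lam * A ((n : ℤ) - 1) = A (-1) := by
    simp only [hA]; rw [hbn1]; exact hlamA (b (-1))
  have hBn1 : B ((n : ℤ) - 1) = B (-1) := by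
    simp only [hB]
    have e : ((n : ℤ) - 1) + 1 = (n : ℤ) := by ring
    have e2 : (-1 : ℤ) + 1 = 0 := by ring
    rw [e, e2, hbn, hbn1]
    exact wedge2_mulVec M hM _ _
  rw [hprod, hBn1]
  have h1 : A ((n : ℤ) - 1) = A (-1) / lam := by
    field_simp; linear_combination hAn1
  have h2 : A (n : ℤ) = A 0 / lam := by
    field_simp; linear_combination hAn
  rw [h1, h2]
  have g1 := hAne (-1 : ℤ)
  have g2 := hAne 0
  have g3 := hBne (-1 : ℤ)
  field_simp
end

section
/- Let λ, x_e ∈ ℂ* and define z = λ/x_e and w = 1/(λ x_e); assume z ≠ 0,1 and w ≠ 0,1. Set z'' = 1 − 1/z, w'' = 1 − 1/w, and x_d = z''·w''. Then λ + λ⁻¹ = x_e + x_e⁻¹ − x_d/x_e. -/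
theorem stmt_8 (lam xe : ℂ) (hlam : lam ≠ 0) (hxe : xe ≠ 0)
    (z w : ℂ) (hz : z = lam / xe) (hw : w = 1 / (lam * xe))
    (hz0 : z ≠ 0) (hz1 : z ≠ 1) (hw0 : w ≠ 0) (hw1 : w ≠ 1)
    (z'' w'' xd : ℂ)
    (hz'' : z'' = 1 - 1 / z) (hw'' : w'' = 1 - 1 / w)
    (hxd : xd = z'' * w'') :
    lam + lam⁻¹ = xe + xe⁻¹ - xd / xe := by
  subst hz hw hz'' hw'' hxd
  field_simp
  ring
end

section
/- Let ℏ ∈ ℂ with Re ℏ < 0, Z ∈ ℂ, q = e^ℏ, q̃ = e^{−4π²/ℏ}, Z̃ = (2πi/ℏ)Z, and let Φ_ℏ(Z) = ∏_{r≥0}(1 − q^{r+1/2}e^Z) / ∏_{r≥0}(1 − q̃^{−r−1/2}e^{Z̃}). Then Φ_ℏ satisfies the second (modular dual) functional equation Φ_ℏ(Z + 2πi) = Φ_ℏ(Z) / (1 − q̃^{1/2}e^{Z̃}), provided all denominators are nonzero. -/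
open Complex

/-- Infinite products `∏ (1 - a tⁿ)` with `‖t‖ < 1` are multipliable. -/
lemma multipliable_one_sub_geom (a t : ℂ) (ht : ‖t‖ < 1) :
    Multipliable (fun n : ℕ => 1 - a * t ^ n) := by
  have h0 : Filter.Tendsto (fun n : ℕ => a * t ^ n) Filter.atTop (nhds 0) := by
    simpa using (tendsto_pow_atTop_nhds_zero_of_norm_lt_one ht).const_mul a
  have hev : ∀ᶠ n : ℕ in Filter.atTop, ‖a * t ^ n‖ ≤ 1 / 2 := by
    have := h0.eventually (Metric.ball_mem_nhds (0 : ℂ) (by norm_num : (0:ℝ) < 1/2))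
    filter_upwards [this] with n hn
    simpa [mem_ball_zero_iff] using hn.le
  obtain ⟨N, hN⟩ := Filter.eventually_atTop.mp hev
  apply Multipliable.comp_nat_add (k := N)
  set b : ℂ := a * t ^ N with hb
  have hsmall : ∀ n : ℕ, ‖b * t ^ n‖ ≤ 1 / 2 := by
    intro n
    have : b * t ^ n = a * t ^ (n + N) := by rw [hb, pow_add]; ring
    rw [this]
    exact hN (n + N) (Nat.le_add_left N n)
  have key : Multipliable (fun n : ℕ => 1 - b * t ^ n) := by
    refine (fun (_ : Unit → ∀ n : ℕ, 1 - b * t ^ n = 0 → False)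
      (h2 : Unit → Summable fun n : ℕ => Complex.log (1 - b * t ^ n)) =>
        Complex.multipliable_of_summable_log (h2 ())) ?_ ?_
    · intro _ n h
      have h1 : b * t ^ n = 1 := by linear_combination -h
      have := hsmall n
      rw [h1] at this
      norm_num at this
    · intro _
      apply Summable.of_norm_bounded (g := fun n : ℕ => 3 / 2 * (‖b‖ * ‖t‖ ^ n))
      · exact ((summable_geometric_of_lt_one (norm_nonneg t) ht).mul_left ‖b‖).mul_left _
      · intro n
        have h1 : (1 : ℂ) - b * t ^ n = 1 + -(b * t ^ n) := by ring
        show ‖Complex.log (1 - b * t ^ n)‖ ≤ 3 / 2 * (‖b‖ * ‖t‖ ^ n)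
        rw [h1]
        calc ‖Complex.log (1 + -(b * t ^ n))‖ ≤ 3 / 2 * ‖-(b * t ^ n)‖ :=
              Complex.norm_log_one_add_half_le_self (by simpa using hsmall n)
          _ = 3 / 2 * (‖b‖ * ‖t‖ ^ n) := by rw [norm_neg, norm_mul, norm_pow]
  exact key.congr fun n => by rw [pow_add]; ring

/-- Numerator of the noncompact quantum dilogarithm:
`∏_{r≥0} (1 − q^{r+1/2} e^Z)` with `q = e^ℏ`, i.e. `q^{r+1/2} = e^{(r+1/2)ℏ}`. -/
noncomputable def PhiNum (ℏ Z : ℂ) : ℂ :=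
  ∏' r : ℕ, (1 - Complex.exp (((r : ℂ) + 1 / 2) * ℏ) * Complex.exp Z)

/-- Denominator of the noncompact quantum dilogarithm:
`∏_{r≥0} (1 − q̃^{−r−1/2} e^{Z̃})` with `q̃ = e^{−4π²/ℏ}` and `Z̃ = (2πi/ℏ)Z`. -/
noncomputable def PhiDen (ℏ Z : ℂ) : ℂ :=
  ∏' r : ℕ, (1 - Complex.exp ((-(r : ℂ) - 1 / 2) * (-(4 * (Real.pi : ℂ) ^ 2 / ℏ))) *
    Complex.exp ((2 * (Real.pi : ℂ) * Complex.I / ℏ) * Z))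

/-- The noncompact quantum dilogarithm `Φ_ℏ(Z)`. -/
noncomputable def Phi (ℏ Z : ℂ) : ℂ := PhiNum ℏ Z / PhiDen ℏ Z

set_option maxHeartbeats 1000000 in
theorem stmt_13 (ℏ Z : ℂ) (hℏ : ℏ.re < 0)
    (hd1 : PhiDen ℏ Z ≠ 0)
    (hd2 : PhiDen ℏ (Z + 2 * (Real.pi : ℂ) * Complex.I) ≠ 0)
    (hfac : 1 - Complex.exp (-(2 * (Real.pi : ℂ) ^ 2 / ℏ)) *
      Complex.exp ((2 * (Real.pi : ℂ) * Complex.I / ℏ) * Z) ≠ 0) :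
    Phi ℏ (Z + 2 * (Real.pi : ℂ) * Complex.I) =
      Phi ℏ Z / (1 - Complex.exp (-(2 * (Real.pi : ℂ) ^ 2 / ℏ)) *
        Complex.exp ((2 * (Real.pi : ℂ) * Complex.I / ℏ) * Z)) := by
  have hℏ0 : ℏ ≠ 0 := by
    intro h; rw [h] at hℏ; simp at hℏ
  set t : ℂ := Complex.exp (4 * (Real.pi : ℂ) ^ 2 / ℏ) with htdef
  set a : ℂ := Complex.exp (2 * (Real.pi : ℂ) ^ 2 / ℏ + (2 * (Real.pi : ℂ) * Complex.I / ℏ) * Z)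
    with hadef
  set a' : ℂ := Complex.exp (-(2 * (Real.pi : ℂ) ^ 2 / ℏ) + (2 * (Real.pi : ℂ) * Complex.I / ℏ) * Z)
    with ha'def
  -- ‖t‖ < 1
  have ht : ‖t‖ < 1 := by
    rw [htdef, Complex.norm_exp]
    apply Real.exp_lt_one_iff.mpr
    have h4 : (4 * (Real.pi : ℂ) ^ 2 / ℏ) = ((4 * Real.pi ^ 2 : ℝ) : ℂ) / ℏ := by push_cast; ring
    rw [h4, Complex.div_re]
    have hns : 0 < Complex.normSq ℏ := Complex.normSq_pos.mpr hℏ0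
    have hpi : (0:ℝ) < 4 * Real.pi ^ 2 := by positivity
    simp only [Complex.ofReal_re, Complex.ofReal_im, zero_mul, zero_div, add_zero]
    apply div_neg_of_neg_of_pos _ hns
    exact mul_neg_of_pos_of_neg hpi hℏ
  -- rewrite denominators as geometric-type products
  have hden1 : PhiDen ℏ Z = ∏' r : ℕ, (1 - a * t ^ r) := by
    unfold PhiDen
    refine tprod_congr fun r => ?_
    rw [hadef, htdef, ← Complex.exp_nat_mul, ← Complex.exp_add, ← Complex.exp_add]
    congr 2
    ring
  have hden2 : PhiDen ℏ (Z + 2 * (Real.pi : ℂ) * Complex.I) = ∏' r : ℕ, (1 - a' * t ^ r) := by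
    unfold PhiDen
    refine tprod_congr fun r => ?_
    rw [ha'def, htdef, ← Complex.exp_nat_mul, ← Complex.exp_add, ← Complex.exp_add]
    congr 2
    linear_combination (4 * (Real.pi : ℂ) ^ 2 / ℏ) * Complex.I_sq
  -- numerator is 2πi-periodic
  have hnum : PhiNum ℏ (Z + 2 * (Real.pi : ℂ) * Complex.I) = PhiNum ℏ Z := by
    unfold PhiNum
    refine tprod_congr fun r => ?_
    rw [Complex.exp_add, Complex.exp_two_pi_mul_I, mul_one]
  -- shift relation a' * t = a
  have hat : a' * t = a := by
    rw [hadef, ha'def, htdef, ← Complex.exp_add]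
    congr 1
    ring
  clear_value t a a'
  have hM : Multipliable (fun r : ℕ => 1 - a * t ^ r) := multipliable_one_sub_geom a t ht
  have hshift : (∏' r : ℕ, (1 - a' * t ^ r)) = (1 - a') * ∏' r : ℕ, (1 - a * t ^ r) := by
    have hM' : Multipliable (fun n : ℕ => 1 - a' * t ^ (n + 1)) := by
      refine hM.congr fun n => ?_
      rw [← hat, pow_add]; ring
    rw [tprod_eq_zero_mul' (f := fun n : ℕ => 1 - a' * t ^ n) hM']
    congr 1
    · rw [pow_zero, mul_one]
    · refine tprod_congr fun n => ?_
      rw [← hat, pow_add]; ring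
  -- the extra factor equals 1 - a'
  have hfacEq : 1 - Complex.exp (-(2 * (Real.pi : ℂ) ^ 2 / ℏ)) *
      Complex.exp ((2 * (Real.pi : ℂ) * Complex.I / ℏ) * Z) = 1 - a' := by
    rw [ha'def, Complex.exp_add]
  have hden2' : PhiDen ℏ (Z + 2 * (Real.pi : ℂ) * Complex.I) = (1 - a') * PhiDen ℏ Z := by
    rw [hden2, hshift, hden1]
  unfold Phi
  rw [hnum, hden2', hfacEq, hden1]
  rw [div_div]
  congr 1
  ring
end
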